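/- Let n be a natural number and let X, Y be n×n complex matrices. Then ‖|X*| + |Y*|‖₂ ≤ √2 · ‖|X| + |Y|‖₂. -/

import Mathlib

open Matrix
open scoped ComplexOrder

/-- Hilbert–Schmidt (Frobenius) norm: ‖X‖₂ = √(Re Tr(XᴴX)). -/
noncomputable def hsNorm {n : ℕ} (X : Matrix (Fin n) (Fin n) ℂ) : ℝ :=
  Real.sqrt ((Matrix.trace (Xᴴ * X)).re)

/-- Angle Θ(X,Y) = arccos(Re Tr(YᴴX) / (‖X‖₂‖Y‖₂)). -/
noncomputable def theta {n : ℕ} (X Y : Matrix (Fin n) (Fin n) ℂ) : ℝ :=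
  Real.arccos ((Matrix.trace (Yᴴ * X)).re / (hsNorm X * hsNorm Y))

/-- |X| : the positive semidefinite square root of XᴴX. -/
noncomputable def matAbs {n : ℕ} (X : Matrix (Fin n) (Fin n) ℂ) : Matrix (Fin n) (Fin n) ℂ :=
  (Matrix.posSemidef_conjTranspose_mul_self X).1.eigenvectorUnitary.1 *
    Matrix.diagonal ((↑) ∘ (√·) ∘ (Matrix.posSemidef_conjTranspose_mul_self X).1.eigenvalues) *
    (star (Matrix.posSemidef_conjTranspose_mul_self X).1.eigenvectorUnitary : Matrix (Fin n) (Fin n) ℂ)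

/-- square root of a PSD matrix (replacement for the removed `PosSemidef.sqrt`) -/
noncomputable def Matrix.PosSemidef.sqrt {n : ℕ} {P : Matrix (Fin n) (Fin n) ℂ}
    (hP : P.PosSemidef) : Matrix (Fin n) (Fin n) ℂ :=
  hP.1.eigenvectorUnitary.1 * Matrix.diagonal ((↑) ∘ (√·) ∘ hP.1.eigenvalues) *
    (star hP.1.eigenvectorUnitary : Matrix (Fin n) (Fin n) ℂ)

lemma Matrix.PosSemidef.posSemidef_sqrt {n : ℕ} {P : Matrix (Fin n) (Fin n) ℂ}
    (hP : P.PosSemidef) : hP.sqrt.PosSemidef := by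
  have hD : (Matrix.diagonal ((↑) ∘ (√·) ∘ hP.1.eigenvalues : Fin n → ℂ)).PosSemidef := by
    rw [Matrix.posSemidef_diagonal_iff]
    intro i
    simp only [Function.comp_apply, Complex.zero_le_real]
    exact Real.sqrt_nonneg _
  have := hD.mul_mul_conjTranspose_same (hP.1.eigenvectorUnitary.1)
  exact this

lemma Matrix.PosSemidef.sqrt_mul_self {n : ℕ} {P : Matrix (Fin n) (Fin n) ℂ}
    (hP : P.PosSemidef) : hP.sqrt * hP.sqrt = P := by
  have hU : (star hP.1.eigenvectorUnitary : Matrix (Fin n) (Fin n) ℂ) *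
      hP.1.eigenvectorUnitary.1 = 1 := Unitary.coe_star_mul_self _
  have hDD : Matrix.diagonal ((↑) ∘ (√·) ∘ hP.1.eigenvalues : Fin n → ℂ) *
      Matrix.diagonal ((↑) ∘ (√·) ∘ hP.1.eigenvalues : Fin n → ℂ) =
      Matrix.diagonal (RCLike.ofReal ∘ hP.1.eigenvalues) := by
    rw [Matrix.diagonal_mul_diagonal]
    congr 1
    funext i
    simp only [Function.comp_apply]
    rw [← Complex.ofReal_mul, Real.mul_self_sqrt (hP.eigenvalues_nonneg i)]
    rfl
  unfold Matrix.PosSemidef.sqrt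
  calc _ = hP.1.eigenvectorUnitary.1 *
        (Matrix.diagonal ((↑) ∘ (√·) ∘ hP.1.eigenvalues : Fin n → ℂ) *
        ((star hP.1.eigenvectorUnitary : Matrix (Fin n) (Fin n) ℂ) *
        hP.1.eigenvectorUnitary.1) *
        Matrix.diagonal ((↑) ∘ (√·) ∘ hP.1.eigenvalues : Fin n → ℂ)) *
        (star hP.1.eigenvectorUnitary : Matrix (Fin n) (Fin n) ℂ) := by
          simp only [Matrix.mul_assoc]
    _ = P := by
      rw [hU, Matrix.mul_one, hDD]
      conv_rhs => rw [hP.1.spectral_theorem, Unitary.conjStarAlgAut_apply]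

/-- trace of a PSD matrix has nonneg real part -/
lemma trace_re_nonneg_of_psd {n : ℕ} {M : Matrix (Fin n) (Fin n) ℂ}
    (hM : M.PosSemidef) : 0 ≤ (Matrix.trace M).re := by
  rw [Matrix.trace, Complex.re_sum]
  apply Finset.sum_nonneg
  intro i _
  have := hM.re_dotProduct_nonneg (Pi.single i 1)
  simpa [dotProduct, Matrix.mulVec, Pi.single_apply, Matrix.diag] using this

lemma trace_mul_re_nonneg {n : ℕ} {P Q : Matrix (Fin n) (Fin n) ℂ}
    (hP : P.PosSemidef) (hQ : Q.PosSemidef) : 0 ≤ (Matrix.trace (P * Q)).re := by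
  have h2 : Matrix.trace (P * Q) = Matrix.trace (hP.sqrtᴴ * Q * hP.sqrt) := by
    conv_lhs => rw [← hP.sqrt_mul_self]
    rw [mul_assoc, Matrix.trace_mul_comm]
    exact congrArg (fun M => Matrix.trace (M * Q * hP.sqrt)) hP.posSemidef_sqrt.isHermitian.symm
  rw [h2]
  exact trace_re_nonneg_of_psd (hQ.conjTranspose_mul_mul_same _)

/-- the matrix as a vector in Euclidean space -/
noncomputable def mvec {n : ℕ} (A : Matrix (Fin n) (Fin n) ℂ) :
    EuclideanSpace ℂ (Fin n × Fin n) := WithLp.toLp 2 (fun p : Fin n × Fin n => A p.1 p.2)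

lemma trace_eq_inner {n : ℕ} (A B : Matrix (Fin n) (Fin n) ℂ) :
    Matrix.trace (Aᴴ * B) = inner ℂ (mvec A) (mvec B) := by
  rw [PiLp.inner_apply, Matrix.trace, ← Finset.univ_product_univ, Finset.sum_product]
  simp only [Matrix.diag, Matrix.mul_apply, Matrix.conjTranspose_apply, mvec,
    RCLike.inner_apply]
  rw [Finset.sum_comm]
  exact Finset.sum_congr rfl fun _ _ => Finset.sum_congr rfl fun _ _ => mul_comm _ _

lemma hsNorm_eq_norm {n : ℕ} (A : Matrix (Fin n) (Fin n) ℂ) :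
    hsNorm A = ‖mvec A‖ := by
  rw [hsNorm, EuclideanSpace.norm_eq]
  congr 1
  have := trace_eq_inner A A
  rw [this, PiLp.inner_apply, Complex.re_sum]
  apply Finset.sum_congr rfl
  intro p _
  simp [mvec, Complex.mul_re, Complex.normSq, ← Complex.ofReal_pow, Complex.sq_norm,
    Complex.normSq_apply]

lemma cs {n : ℕ} (A B : Matrix (Fin n) (Fin n) ℂ) :
    (Matrix.trace (Aᴴ * B)).re ≤ hsNorm A * hsNorm B := by
  rw [trace_eq_inner, hsNorm_eq_norm, hsNorm_eq_norm]
  exact re_inner_le_norm (𝕜 := ℂ) _ _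

lemma hsNorm_nonneg {n : ℕ} (A : Matrix (Fin n) (Fin n) ℂ) : 0 ≤ hsNorm A :=
  Real.sqrt_nonneg _

lemma hsNorm_sq {n : ℕ} (A : Matrix (Fin n) (Fin n) ℂ) :
    hsNorm A ^ 2 = (Matrix.trace (Aᴴ * A)).re := by
  rw [hsNorm, Real.sq_sqrt]
  rw [trace_eq_inner]
  exact inner_self_nonneg (𝕜 := ℂ) (x := mvec A)

lemma matAbs_psd {n : ℕ} (X : Matrix (Fin n) (Fin n) ℂ) : (matAbs X).PosSemidef :=
  (Matrix.posSemidef_conjTranspose_mul_self X).posSemidef_sqrt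

lemma matAbs_mul_self {n : ℕ} (X : Matrix (Fin n) (Fin n) ℂ) :
    matAbs X * matAbs X = Xᴴ * X :=
  (Matrix.posSemidef_conjTranspose_mul_self X).sqrt_mul_self

lemma hsNorm_matAbs {n : ℕ} (X : Matrix (Fin n) (Fin n) ℂ) :
    hsNorm (matAbs X) = hsNorm X := by
  unfold hsNorm
  rw [(matAbs_psd X).isHermitian.eq, matAbs_mul_self]

lemma hsNorm_matAbs_ct {n : ℕ} (X : Matrix (Fin n) (Fin n) ℂ) :
    hsNorm (matAbs Xᴴ) = hsNorm X := by
  unfold hsNorm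
  rw [(matAbs_psd Xᴴ).isHermitian.eq, matAbs_mul_self, Matrix.conjTranspose_conjTranspose,
    Matrix.trace_mul_comm]

lemma hs_expand {n : ℕ} (A B : Matrix (Fin n) (Fin n) ℂ) :
    (Matrix.trace ((A + B)ᴴ * (A + B))).re =
      hsNorm A ^ 2 + hsNorm B ^ 2 + 2 * (Matrix.trace (Aᴴ * B)).re := by
  have h : Matrix.trace (Bᴴ * A) = star (Matrix.trace (Aᴴ * B)) := by
    rw [← Matrix.trace_conjTranspose, Matrix.conjTranspose_mul,
      Matrix.conjTranspose_conjTranspose]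
  rw [Matrix.conjTranspose_add, add_mul, mul_add, mul_add, Matrix.trace_add,
    Matrix.trace_add, Matrix.trace_add]
  simp only [Complex.add_re, hsNorm_sq, h, Complex.star_def, Complex.conj_re]
  ring

theorem stmt_18 {n : ℕ} (X Y : Matrix (Fin n) (Fin n) ℂ) :
    hsNorm (matAbs Xᴴ + matAbs Yᴴ) ≤ Real.sqrt 2 * hsNorm (matAbs X + matAbs Y) := by
  have key : (Matrix.trace ((matAbs Xᴴ + matAbs Yᴴ)ᴴ * (matAbs Xᴴ + matAbs Yᴴ))).re ≤
      2 * (Matrix.trace ((matAbs X + matAbs Y)ᴴ * (matAbs X + matAbs Y))).re := by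
    rw [hs_expand, hs_expand, hsNorm_matAbs_ct, hsNorm_matAbs_ct, hsNorm_matAbs, hsNorm_matAbs]
    have h1 : (Matrix.trace ((matAbs Xᴴ)ᴴ * matAbs Yᴴ)).re ≤ hsNorm X * hsNorm Y := by
      have := cs (matAbs Xᴴ) (matAbs Yᴴ)
      rwa [hsNorm_matAbs_ct, hsNorm_matAbs_ct] at this
    have h2 : 0 ≤ (Matrix.trace ((matAbs X)ᴴ * matAbs Y)).re := by
      rw [(matAbs_psd X).isHermitian.eq]
      exact trace_mul_re_nonneg (matAbs_psd X) (matAbs_psd Y)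
    nlinarith [hsNorm_nonneg X, hsNorm_nonneg Y, sq_nonneg (hsNorm X - hsNorm Y)]
  rw [hsNorm, hsNorm, ← Real.sqrt_mul (by norm_num : (0:ℝ) ≤ 2)]
  exact Real.sqrt_le_sqrt key
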